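/- Let G be a connected distance-hereditary graph, and let G' be obtained from G by adding a leaf or by performing a (true or false) twin-split. Then |T(G')| ≥ |T(G)|. -/
import Mathlib


universe u v w

attribute [local instance 10] Classical.propDecidable

noncomputable section

variable {V : Type u} {E : Type v} {W : Type w}

/-- A finite labeled simple graph: a finite vertex set together with an
adjacency relation.  Well-formedness (symmetry, irreflexivity, support on the
vertex set) is captured by `LGraph.IsGraph`. -/
structure LGraph (V : Type u) where
  verts : Finset V
  Adj : V → V → Prop

namespace LGraph

/-- `G` is an honest simple graph: `Adj` is symmetric, irreflexive and
supported on the vertex set. -/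
def IsGraph (G : LGraph V) : Prop :=
  (∀ a b, G.Adj a b → G.Adj b a) ∧ (∀ a, ¬ G.Adj a a) ∧
    (∀ a b, G.Adj a b → a ∈ G.verts ∧ b ∈ G.verts)

/-- Local complementation at a vertex `v`: toggle every edge between two
distinct neighbours of `v`. -/
def localComp (G : LGraph V) (v : V) : LGraph V :=
  ⟨G.verts, fun a b => a ≠ b ∧ Xor' (G.Adj a b) (G.Adj v a ∧ G.Adj v b)⟩

/-- `τ_{v_k} ∘ ⋯ ∘ τ_{v_1}(G)` for a sequence `l = v_1 … v_k`. -/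
def localCompSeq (G : LGraph V) (l : List V) : LGraph V :=
  l.foldl LGraph.localComp G

/-- Induced subgraph on a set of vertices `A`. -/
def induce (G : LGraph V) (A : Finset V) : LGraph V :=
  ⟨G.verts ∩ A, fun a b => G.Adj a b ∧ a ∈ A ∧ b ∈ A⟩

/-- Vertex deletion `G \ v`. -/
def delete (G : LGraph V) (v : V) : LGraph V :=
  G.induce (G.verts.erase v)

/-- `G'` is a vertex-minor of `G`: there is a sequence of local
complementations at vertices of `G` after which the induced subgraph
on `V(G')` equals `G'`. -/
def IsVertexMinor (G' G : LGraph V) : Prop :=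
  ∃ l : List V, (∀ x ∈ l, x ∈ G.verts) ∧ (G.localCompSeq l).induce G'.verts = G'

/-- `G` and `G'` are related by a sequence of local complementations. -/
def LCEquiv (G G' : LGraph V) : Prop :=
  ∃ l : List V, (∀ x ∈ l, x ∈ G.verts) ∧ G.localCompSeq l = G'

/-- Connectedness of a labeled graph. -/
def Connected (G : LGraph V) : Prop :=
  G.verts.Nonempty ∧ ∀ a ∈ G.verts, ∀ b ∈ G.verts, Relation.ReflTransGen G.Adj a b

end LGraph

/-- The star graph on vertex set `V'` with center `c`. -/
def starGraph (V' : Finset V) (c : V) : LGraph V :=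
  ⟨V', fun a b => a ∈ V' ∧ b ∈ V' ∧ a ≠ b ∧ (a = c ∨ b = c)⟩

/-- `S_{V'} < G`: some star graph on the vertex set `V'` is a vertex-minor
of `G` (all stars on `V'` are LC-equivalent, so the choice of center is
immaterial). -/
def HasStarVertexMinor (G : LGraph V) (V' : Finset V) : Prop :=
  ∃ c ∈ V', (starGraph V' c).IsVertexMinor G

/-- Graph distance: the least `n` such that there is a walk with `n` edges
from `a` to `b` inside `G`. -/
def LGraph.dist (G : LGraph V) (a b : V) : ℕ :=
  sInf {n | ∃ vs : List V, vs.Chain' G.Adj ∧ (∀ x ∈ vs, x ∈ G.verts) ∧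
    vs.head? = some a ∧ vs.getLast? = some b ∧ vs.length = n + 1}

/-- `G` is distance-hereditary: in every connected induced subgraph,
distances agree with those in `G`. -/
def LGraph.DistanceHereditary (G : LGraph V) : Prop :=
  ∀ A : Finset V, A ⊆ G.verts → (G.induce A).Connected →
    ∀ a ∈ A, ∀ b ∈ A, (G.induce A).dist a b = G.dist a b

/-- The neighbourhood of a vertex. -/
def LGraph.nbhd (G : LGraph V) (x : V) : Set V := {u | G.Adj x u}

/-- A leaf: a vertex of degree one. -/
def LGraph.IsLeaf (G : LGraph V) (x : V) : Prop :=
  x ∈ G.verts ∧ ∃ u, G.nbhd x = {u}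

/-- An axil: the neighbour of a leaf. -/
def LGraph.IsAxil (G : LGraph V) (x : V) : Prop :=
  ∃ l, G.IsLeaf l ∧ G.Adj l x

/-- A twin: a vertex `x` such that some other vertex `u` has
`N_x \ {u} = N_u \ {x}`. -/
def LGraph.IsTwin (G : LGraph V) (x : V) : Prop :=
  x ∈ G.verts ∧ ∃ u, u ≠ x ∧ u ∈ G.verts ∧ G.nbhd x \ {u} = G.nbhd u \ {x}

/-- The foliage `T(G)`: the set of leaves, axils and twins of `G`. -/
def LGraph.foliage (G : LGraph V) : Finset V :=
  G.verts.filter fun x => G.IsLeaf x ∨ G.IsAxil x ∨ G.IsTwin x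

/-- Add a new leaf `x` attached to the vertex `u`. -/
def LGraph.addLeaf (G : LGraph V) (u x : V) : LGraph V :=
  ⟨insert x G.verts, fun a b => G.Adj a b ∨ (a = u ∧ b = x) ∨ (a = x ∧ b = u)⟩

/-- False twin-split at `u`: add a new vertex `x` adjacent exactly to the
neighbours of `u`. -/
def LGraph.falseTwinSplit (G : LGraph V) (u x : V) : LGraph V :=
  ⟨insert x G.verts, fun a b => G.Adj a b ∨ (a = x ∧ G.Adj u b) ∨ (b = x ∧ G.Adj u a)⟩

/-- True twin-split at `u`: add a new vertex `x` adjacent exactly to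
`N_u ∪ {u}`. -/
def LGraph.trueTwinSplit (G : LGraph V) (u x : V) : LGraph V :=
  ⟨insert x G.verts, fun a b =>
    G.Adj a b ∨ (a = x ∧ (G.Adj u b ∨ b = u)) ∨ (b = x ∧ (G.Adj u a ∨ a = u))⟩

/-! ### Auxiliary machinery for `foliage_card_mono` -/

section Foliage8Aux

lemma mem_foliage' {H : LGraph V} {w : V} :
    w ∈ H.foliage ↔ w ∈ H.verts ∧ (H.IsLeaf w ∨ H.IsAxil w ∨ H.IsTwin w) :=
  Finset.mem_filter

lemma twin_elem' {G : LGraph V} {a b z : V}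
    (h : G.nbhd a \ {b} = G.nbhd b \ {a}) (hzb : z ≠ b) (hza : z ≠ a) :
    G.Adj a z ↔ G.Adj b z := by
  have := Set.ext_iff.mp h z
  simpa [LGraph.nbhd, hzb, hza] using this

lemma common_twin_aux {G : LGraph V} (hsym : ∀ a b, G.Adj a b → G.Adj b a)
    {u a b : V} (ha : G.nbhd a \ {u} = G.nbhd u \ {a})
    (hb : G.nbhd b \ {u} = G.nbhd u \ {b})
    (hau : a ≠ u) (hbu : b ≠ u) (hab : a ≠ b) (h : G.Adj u a) : G.Adj u b := by
  by_contra hnot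
  have hA : G.Adj b a := (twin_elem' hb hau hab).mpr h
  exact hnot ((twin_elem' ha hbu hab.symm).mp (hsym _ _ hA))

lemma twin_of_common {G : LGraph V} (hsym : ∀ a b, G.Adj a b → G.Adj b a)
    (hirr : ∀ a, ¬ G.Adj a a) {u v1 v2 : V}
    (h1 : G.nbhd v1 \ {u} = G.nbhd u \ {v1})
    (h2 : G.nbhd v2 \ {u} = G.nbhd u \ {v2})
    (hv1 : v1 ≠ u) (hv2 : v2 ≠ u) (hne : v1 ≠ v2) :
    G.nbhd v1 \ {v2} = G.nbhd v2 \ {v1} := by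
  have hu12 : G.Adj u v1 ↔ G.Adj u v2 :=
    ⟨common_twin_aux hsym h1 h2 hv1 hv2 hne, common_twin_aux hsym h2 h1 hv2 hv1 hne.symm⟩
  ext z
  by_cases hz1 : z = v1
  · simp [hz1, Set.mem_diff, LGraph.nbhd, hirr v1]
  by_cases hz2 : z = v2
  · simp [hz2, Set.mem_diff, LGraph.nbhd, hirr v2]
  by_cases hzu : z = u
  · have husym : G.Adj v1 u ↔ G.Adj v2 u :=
      ⟨fun h => hsym _ _ (hu12.mp (hsym _ _ h)), fun h => hsym _ _ (hu12.mpr (hsym _ _ h))⟩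
    simp [hzu, Set.mem_diff, LGraph.nbhd, Ne.symm hv1, Ne.symm hv2, husym]
  · have e1 : G.Adj v1 z ↔ G.Adj u z := twin_elem' h1 hzu hz1
    have e2 : G.Adj v2 z ↔ G.Adj u z := twin_elem' h2 hzu hz2
    simp [LGraph.nbhd, Set.mem_diff, hz1, hz2, e1, e2]

lemma count_lemma (F F' : Finset V) (x : V) (hx : x ∉ F) (hx' : x ∈ F')
    (huniq : ∀ v1 ∈ F, ∀ v2 ∈ F, v1 ∉ F' → v2 ∉ F' → v1 = v2) :
    F.card ≤ F'.card := by
  have h1 : (F \ F').card ≤ 1 := by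
    refine Finset.card_le_one.mpr ?_
    intro a ha b hb
    simp only [Finset.mem_sdiff] at ha hb
    exact huniq a ha.1 b hb.1 ha.2 hb.2
  have hxn : x ∉ F ∩ F' := fun h => hx (Finset.mem_inter.mp h).1
  have h2 : insert x (F ∩ F') ⊆ F' := by
    intro y hy
    rcases Finset.mem_insert.mp hy with rfl | hy
    · exact hx'
    · exact (Finset.mem_inter.mp hy).2
  calc F.card = (F ∩ F').card + (F \ F').card := (Finset.card_inter_add_card_sdiff F F').symm
    _ ≤ (F ∩ F').card + 1 := by omega
    _ = (insert x (F ∩ F')).card := (Finset.card_insert_of_notMem hxn).symm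
    _ ≤ F'.card := Finset.card_le_card h2

section AddLeafAux

variable {G : LGraph V} {u x : V}

lemma addLeaf_verts : (G.addLeaf u x).verts = insert x G.verts := rfl

lemma addLeaf_adj_left (hsupp : ∀ a b, G.Adj a b → a ∈ G.verts ∧ b ∈ G.verts)
    (hx : x ∉ G.verts) {v b : V} (hv : v ∈ G.verts) :
    (G.addLeaf u x).Adj v b ↔ G.Adj v b ∨ (v = u ∧ b = x) := by
  show G.Adj v b ∨ (v = u ∧ b = x) ∨ (v = x ∧ b = u) ↔ _
  constructor
  · rintro (h | h | ⟨rfl, rfl⟩)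
    · exact Or.inl h
    · exact Or.inr h
    · exact absurd hv hx
  · rintro (h | h)
    exacts [Or.inl h, Or.inr (Or.inl h)]

lemma addLeaf_nbhd (hsupp : ∀ a b, G.Adj a b → a ∈ G.verts ∧ b ∈ G.verts)
    (hx : x ∉ G.verts) {v : V} (hv : v ∈ G.verts) (hvu : v ≠ u) :
    (G.addLeaf u x).nbhd v = G.nbhd v := by
  ext b
  simp [LGraph.nbhd, addLeaf_adj_left hsupp hx hv, hvu]

lemma addLeaf_nbhd_x (hsupp : ∀ a b, G.Adj a b → a ∈ G.verts ∧ b ∈ G.verts)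
    (hu : u ∈ G.verts) (hx : x ∉ G.verts) :
    (G.addLeaf u x).nbhd x = {u} := by
  have hxu : x ≠ u := fun h => hx (h ▸ hu)
  ext b
  show G.Adj x b ∨ (x = u ∧ b = x) ∨ (x = x ∧ b = u) ↔ b ∈ ({u} : Set V)
  simp only [Set.mem_singleton_iff]
  constructor
  · rintro (h | ⟨h, -⟩ | ⟨-, rfl⟩)
    · exact absurd (hsupp _ _ h).1 hx
    · exact absurd h hxu
    · rfl
  · rintro rfl
    tauto

lemma addLeaf_x_leaf (hsupp : ∀ a b, G.Adj a b → a ∈ G.verts ∧ b ∈ G.verts)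
    (hu : u ∈ G.verts) (hx : x ∉ G.verts) : (G.addLeaf u x).IsLeaf x :=
  ⟨by rw [addLeaf_verts]; exact Finset.mem_insert_self _ _,
   u, addLeaf_nbhd_x hsupp hu hx⟩

lemma addLeaf_x_foliage (hsupp : ∀ a b, G.Adj a b → a ∈ G.verts ∧ b ∈ G.verts)
    (hu : u ∈ G.verts) (hx : x ∉ G.verts) : x ∈ (G.addLeaf u x).foliage :=
  mem_foliage'.mpr ⟨(addLeaf_x_leaf hsupp hu hx).1, Or.inl (addLeaf_x_leaf hsupp hu hx)⟩

lemma addLeaf_u_foliage (hsupp : ∀ a b, G.Adj a b → a ∈ G.verts ∧ b ∈ G.verts)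
    (hu : u ∈ G.verts) (hx : x ∉ G.verts) : u ∈ (G.addLeaf u x).foliage := by
  refine mem_foliage'.mpr ⟨by rw [addLeaf_verts]; exact Finset.mem_insert_of_mem hu,
    Or.inr (Or.inl ⟨x, addLeaf_x_leaf hsupp hu hx, Or.inr (Or.inr ⟨rfl, rfl⟩)⟩)⟩

lemma addLeaf_leaf_surv (hsupp : ∀ a b, G.Adj a b → a ∈ G.verts ∧ b ∈ G.verts)
    (hx : x ∉ G.verts) {v : V} (hl : G.IsLeaf v) (hvu : v ≠ u) :
    (G.addLeaf u x).IsLeaf v := by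
  obtain ⟨hv, w, hw⟩ := hl
  exact ⟨by rw [addLeaf_verts]; exact Finset.mem_insert_of_mem hv,
    w, by rw [addLeaf_nbhd hsupp hx hv hvu, hw]⟩

lemma addLeaf_twin_surv (hsupp : ∀ a b, G.Adj a b → a ∈ G.verts ∧ b ∈ G.verts)
    (hx : x ∉ G.verts) {v w : V} (hv : v ∈ G.verts) (hw : w ∈ G.verts)
    (hwv : w ≠ v) (hvu : v ≠ u) (hwu : w ≠ u)
    (heq : G.nbhd v \ {w} = G.nbhd w \ {v}) : (G.addLeaf u x).IsTwin v := by
  refine ⟨by rw [addLeaf_verts]; exact Finset.mem_insert_of_mem hv,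
    w, hwv, by rw [addLeaf_verts]; exact Finset.mem_insert_of_mem hw, ?_⟩
  rw [addLeaf_nbhd hsupp hx hv hvu, addLeaf_nbhd hsupp hx hw hwu]
  exact heq

lemma addLeaf_lost (hsupp : ∀ a b, G.Adj a b → a ∈ G.verts ∧ b ∈ G.verts)
    (hu : u ∈ G.verts) (hx : x ∉ G.verts) {v : V}
    (hf : v ∈ G.foliage) (hnf : v ∉ (G.addLeaf u x).foliage) :
    v ∈ G.verts ∧ v ≠ u ∧
      ((G.IsLeaf u ∧ G.Adj u v) ∨ G.nbhd v \ {u} = G.nbhd u \ {v}) := by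
  have hvu : v ≠ u := by
    rintro rfl
    exact hnf (addLeaf_u_foliage hsupp hu hx)
  obtain ⟨hv, hcases⟩ := mem_foliage'.mp hf
  refine ⟨hv, hvu, ?_⟩
  have hv' : v ∈ (G.addLeaf u x).verts := by
    rw [addLeaf_verts]; exact Finset.mem_insert_of_mem hv
  rcases hcases with hl | ⟨l, hlf, hla⟩ | ⟨-, w, hwv, hw, heq⟩
  · exact absurd (mem_foliage'.mpr ⟨hv', Or.inl (addLeaf_leaf_surv hsupp hx hl hvu)⟩) hnf
  · by_cases hlu : l = u
    · subst hlu
      exact Or.inl ⟨hlf, hla⟩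
    · refine absurd (mem_foliage'.mpr ⟨hv', Or.inr (Or.inl ⟨l, ?_, Or.inl hla⟩)⟩) hnf
      exact addLeaf_leaf_surv hsupp hx hlf hlu
  · by_cases hwu : w = u
    · subst hwu
      exact Or.inr heq
    · exact absurd (mem_foliage'.mpr ⟨hv',
        Or.inr (Or.inr (addLeaf_twin_surv hsupp hx hv hw hwv hvu hwu heq))⟩) hnf

lemma addLeaf_AB (hsym : ∀ a b, G.Adj a b → G.Adj b a)
    (hsupp : ∀ a b, G.Adj a b → a ∈ G.verts ∧ b ∈ G.verts)
    (hu : u ∈ G.verts) (hx : x ∉ G.verts) {v1 v2 : V}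
    (hul : G.IsLeaf u) (hua1 : G.Adj u v1)
    (ht2 : G.nbhd v2 \ {u} = G.nbhd u \ {v2}) (hvu2 : v2 ≠ u) (hv2 : v2 ∈ G.verts)
    (hn2 : v2 ∉ (G.addLeaf u x).foliage) (hne : v1 ≠ v2) : False := by
  obtain ⟨-, w, hw⟩ := hul
  have hv1w : v1 = w := by
    have : v1 ∈ G.nbhd u := hua1
    rwa [hw, Set.mem_singleton_iff] at this
  have hnu : ¬ G.Adj v2 u := by
    intro h
    have : v2 ∈ G.nbhd u := hsym _ _ h
    rw [hw, Set.mem_singleton_iff] at this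
    exact hne (hv1w.trans this.symm)
  have hleaf : G.nbhd v2 = {v1} := by
    ext z
    simp only [Set.mem_singleton_iff]
    constructor
    · intro hz
      have hzu : z ≠ u := by rintro rfl; exact hnu hz
      have : z ∈ G.nbhd u \ {v2} := ht2 ▸ (⟨hz, hzu⟩ : z ∈ G.nbhd v2 \ {u})
      have : z ∈ G.nbhd u := this.1
      rw [hw, Set.mem_singleton_iff] at this
      exact this.trans hv1w.symm
    · intro hz
      rw [hz]
      have h1 : v1 ∈ G.nbhd u \ {v2} := ⟨hua1, hne⟩
      rw [← ht2] at h1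
      exact h1.1
  exact hn2 (mem_foliage'.mpr ⟨by rw [addLeaf_verts]; exact Finset.mem_insert_of_mem hv2,
    Or.inl (addLeaf_leaf_surv hsupp hx ⟨hv2, v1, hleaf⟩ hvu2)⟩)

lemma addLeaf_unique (hsym : ∀ a b, G.Adj a b → G.Adj b a) (hirr : ∀ a, ¬ G.Adj a a)
    (hsupp : ∀ a b, G.Adj a b → a ∈ G.verts ∧ b ∈ G.verts)
    (hu : u ∈ G.verts) (hx : x ∉ G.verts) {v1 v2 : V}
    (hf1 : v1 ∈ G.foliage) (hf2 : v2 ∈ G.foliage)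
    (hn1 : v1 ∉ (G.addLeaf u x).foliage) (hn2 : v2 ∉ (G.addLeaf u x).foliage) :
    v1 = v2 := by
  obtain ⟨hv1, hvu1, hc1⟩ := addLeaf_lost hsupp hu hx hf1 hn1
  obtain ⟨hv2, hvu2, hc2⟩ := addLeaf_lost hsupp hu hx hf2 hn2
  by_contra hne
  rcases hc1 with ⟨hul, hua1⟩ | ht1
  · rcases hc2 with ⟨-, hua2⟩ | ht2
    · obtain ⟨-, w, hw⟩ := hul
      have e1 : v1 ∈ G.nbhd u := hua1
      have e2 : v2 ∈ G.nbhd u := hua2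
      rw [hw, Set.mem_singleton_iff] at e1 e2
      exact hne (e1.trans e2.symm)
    · exact addLeaf_AB hsym hsupp hu hx hul hua1 ht2 hvu2 hv2 hn2 hne
  · rcases hc2 with ⟨hul, hua2⟩ | ht2
    · exact addLeaf_AB hsym hsupp hu hx hul hua2 ht1 hvu1 hv1 hn1 (Ne.symm hne)
    · have hmt := twin_of_common hsym hirr ht1 ht2 hvu1 hvu2 hne
      exact hn1 (mem_foliage'.mpr ⟨by rw [addLeaf_verts]; exact Finset.mem_insert_of_mem hv1,
        Or.inr (Or.inr (addLeaf_twin_surv hsupp hx hv1 hv2 (Ne.symm hne) hvu1 hvu2 hmt))⟩)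

lemma addLeaf_card (hG : G.IsGraph) (hu : u ∈ G.verts) (hx : x ∉ G.verts) :
    G.foliage.card ≤ (G.addLeaf u x).foliage.card := by
  obtain ⟨hsym, hirr, hsupp⟩ := hG
  refine count_lemma _ _ x (fun h => hx (Finset.mem_filter.mp h).1)
    (addLeaf_x_foliage hsupp hu hx) ?_
  intro v1 h1 v2 h2 hn1 hn2
  exact addLeaf_unique hsym hirr hsupp hu hx h1 h2 hn1 hn2

end AddLeafAux

lemma insert_diff_swap {s t : Set V} {x w v : V}
    (h : s \ {w} = t \ {v}) (hxw : x ≠ w) (hxv : x ≠ v) :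
    insert x s \ {w} = insert x t \ {v} := by
  ext z
  by_cases hz : z = x
  · simp [hz, hxw, hxv]
  · have := Set.ext_iff.mp h z
    simp only [Set.mem_diff, Set.mem_insert_iff, Set.mem_singleton_iff, hz, false_or] at this ⊢
    tauto

section FalseTwinAux

variable {G : LGraph V} {u x : V}

lemma false_verts : (G.falseTwinSplit u x).verts = insert x G.verts := rfl

lemma false_adj_left (hx : x ∉ G.verts) {v b : V} (hv : v ∈ G.verts) :
    (G.falseTwinSplit u x).Adj v b ↔ G.Adj v b ∨ (b = x ∧ G.Adj u v) := by
  show G.Adj v b ∨ (v = x ∧ G.Adj u b) ∨ (b = x ∧ G.Adj u v) ↔ _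
  have hvx : v ≠ x := fun h => hx (h ▸ hv)
  tauto

lemma false_nbhd_of_nadj (hx : x ∉ G.verts) {v : V} (hv : v ∈ G.verts)
    (hnadj : ¬ G.Adj u v) : (G.falseTwinSplit u x).nbhd v = G.nbhd v := by
  ext b
  simp [LGraph.nbhd, false_adj_left hx hv, hnadj]

lemma false_nbhd_of_adj (hx : x ∉ G.verts) {v : V} (hv : v ∈ G.verts)
    (hadj : G.Adj u v) : (G.falseTwinSplit u x).nbhd v = insert x (G.nbhd v) := by
  ext b
  simp [LGraph.nbhd, false_adj_left hx hv, hadj, Set.mem_insert_iff]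
  tauto

lemma false_nbhd_x (hsupp : ∀ a b, G.Adj a b → a ∈ G.verts ∧ b ∈ G.verts)
    (hx : x ∉ G.verts) : (G.falseTwinSplit u x).nbhd x = G.nbhd u := by
  ext b
  show G.Adj x b ∨ (x = x ∧ G.Adj u b) ∨ (b = x ∧ G.Adj u x) ↔ G.Adj u b
  have h1 : ¬ G.Adj x b := fun h => hx (hsupp _ _ h).1
  have h2 : ¬ G.Adj u x := fun h => hx (hsupp _ _ h).2
  tauto

lemma false_u_nbhd (hirr : ∀ a, ¬ G.Adj a a) (hx : x ∉ G.verts) (hu : u ∈ G.verts) :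
    (G.falseTwinSplit u x).nbhd u = G.nbhd u :=
  false_nbhd_of_nadj hx hu (hirr u)

lemma false_x_twin (hsym : ∀ a b, G.Adj a b → G.Adj b a) (hirr : ∀ a, ¬ G.Adj a a)
    (hsupp : ∀ a b, G.Adj a b → a ∈ G.verts ∧ b ∈ G.verts)
    (hu : u ∈ G.verts) (hx : x ∉ G.verts) :
    (G.falseTwinSplit u x).nbhd x \ {u} = (G.falseTwinSplit u x).nbhd u \ {x} := by
  rw [false_nbhd_x hsupp hx, false_u_nbhd hirr hx hu]
  have h1 : u ∉ G.nbhd u := hirr u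
  have h2 : x ∉ G.nbhd u := fun h => hx (hsupp _ _ h).2
  rw [Set.diff_singleton_eq_self h1, Set.diff_singleton_eq_self h2]

lemma false_x_foliage (hsym : ∀ a b, G.Adj a b → G.Adj b a) (hirr : ∀ a, ¬ G.Adj a a)
    (hsupp : ∀ a b, G.Adj a b → a ∈ G.verts ∧ b ∈ G.verts)
    (hu : u ∈ G.verts) (hx : x ∉ G.verts) : x ∈ (G.falseTwinSplit u x).foliage := by
  have hxu : x ≠ u := fun h => hx (h ▸ hu)
  refine mem_foliage'.mpr ⟨Finset.mem_insert_self _ _, Or.inr (Or.inr ?_)⟩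
  exact ⟨Finset.mem_insert_self _ _, u, Ne.symm hxu, Finset.mem_insert_of_mem hu,
    false_x_twin hsym hirr hsupp hu hx⟩

lemma false_u_foliage (hsym : ∀ a b, G.Adj a b → G.Adj b a) (hirr : ∀ a, ¬ G.Adj a a)
    (hsupp : ∀ a b, G.Adj a b → a ∈ G.verts ∧ b ∈ G.verts)
    (hu : u ∈ G.verts) (hx : x ∉ G.verts) : u ∈ (G.falseTwinSplit u x).foliage := by
  have hxu : x ≠ u := fun h => hx (h ▸ hu)
  refine mem_foliage'.mpr ⟨Finset.mem_insert_of_mem hu, Or.inr (Or.inr ?_)⟩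
  exact ⟨Finset.mem_insert_of_mem hu, x, hxu, Finset.mem_insert_self _ _,
    (false_x_twin hsym hirr hsupp hu hx).symm⟩

lemma false_leaf_surv (hx : x ∉ G.verts) {v : V} (hl : G.IsLeaf v)
    (hnadj : ¬ G.Adj u v) : (G.falseTwinSplit u x).IsLeaf v := by
  obtain ⟨hv, w, hw⟩ := hl
  exact ⟨Finset.mem_insert_of_mem hv, w, by rw [false_nbhd_of_nadj hx hv hnadj, hw]⟩

lemma false_axil_surv (hsym : ∀ a b, G.Adj a b → G.Adj b a) (hirr : ∀ a, ¬ G.Adj a a)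
    (hsupp : ∀ a b, G.Adj a b → a ∈ G.verts ∧ b ∈ G.verts)
    (hu : u ∈ G.verts) (hx : x ∉ G.verts) {v : V} (hv : v ∈ G.verts)
    (hax : G.IsAxil v) : v ∈ (G.falseTwinSplit u x).foliage := by
  obtain ⟨l, hlf, hla⟩ := hax
  by_cases hlu : l = u
  · subst hlu
    refine mem_foliage'.mpr ⟨Finset.mem_insert_of_mem hv, Or.inr (Or.inl ⟨l, ?_, Or.inl hla⟩)⟩
    obtain ⟨hlv, w, hw⟩ := hlf
    exact ⟨Finset.mem_insert_of_mem hlv, w, by rw [false_u_nbhd hirr hx hu, hw]⟩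
  · by_cases hadj : G.Adj u l
    · -- then v = u
      obtain ⟨hlv, w, hw⟩ := hlf
      have e1 : u ∈ G.nbhd l := hsym _ _ hadj
      have e2 : v ∈ G.nbhd l := hla
      rw [hw, Set.mem_singleton_iff] at e1 e2
      rw [e2.trans e1.symm]
      exact false_u_foliage hsym hirr hsupp hu hx
    · refine mem_foliage'.mpr ⟨Finset.mem_insert_of_mem hv, Or.inr (Or.inl ⟨l, ?_, Or.inl hla⟩)⟩
      exact false_leaf_surv hx hlf hadj

lemma false_twin_surv (hsym : ∀ a b, G.Adj a b → G.Adj b a) (hx : x ∉ G.verts)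
    {v w : V} (hv : v ∈ G.verts) (hw : w ∈ G.verts) (hwv : w ≠ v)
    (hvu : v ≠ u) (hwu : w ≠ u) (heq : G.nbhd v \ {w} = G.nbhd w \ {v}) :
    (G.falseTwinSplit u x).IsTwin v := by
  have h0 : G.Adj v u ↔ G.Adj w u := twin_elem' heq (Ne.symm hwu) (Ne.symm hvu)
  have hvx : x ≠ v := fun h => hx (h ▸ hv)
  have hwx : x ≠ w := fun h => hx (h ▸ hw)
  refine ⟨Finset.mem_insert_of_mem hv, w, hwv, Finset.mem_insert_of_mem hw, ?_⟩
  by_cases hadj : G.Adj u v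
  · have hadjw : G.Adj u w := hsym _ _ (h0.mp (hsym _ _ hadj))
    rw [false_nbhd_of_adj hx hv hadj, false_nbhd_of_adj hx hw hadjw]
    exact insert_diff_swap heq hwx hvx
  · have hadjw : ¬ G.Adj u w := fun h => hadj (hsym _ _ (h0.mpr (hsym _ _ h)))
    rw [false_nbhd_of_nadj hx hv hadj, false_nbhd_of_nadj hx hw hadjw]
    exact heq

lemma false_twin_u_surv (hirr : ∀ a, ¬ G.Adj a a) (hu : u ∈ G.verts) (hx : x ∉ G.verts)
    {v : V} (hv : v ∈ G.verts) (hvu : v ≠ u) (hnadj : ¬ G.Adj u v)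
    (heq : G.nbhd v \ {u} = G.nbhd u \ {v}) : (G.falseTwinSplit u x).IsTwin v := by
  refine ⟨Finset.mem_insert_of_mem hv, u, Ne.symm hvu, Finset.mem_insert_of_mem hu, ?_⟩
  rw [false_nbhd_of_nadj hx hv hnadj, false_u_nbhd hirr hx hu]
  exact heq

lemma false_lost (hsym : ∀ a b, G.Adj a b → G.Adj b a) (hirr : ∀ a, ¬ G.Adj a a)
    (hsupp : ∀ a b, G.Adj a b → a ∈ G.verts ∧ b ∈ G.verts)
    (hu : u ∈ G.verts) (hx : x ∉ G.verts) {v : V}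
    (hf : v ∈ G.foliage) (hnf : v ∉ (G.falseTwinSplit u x).foliage) :
    v ∈ G.verts ∧ v ≠ u ∧
      (G.nbhd v = {u} ∨ (G.nbhd v \ {u} = G.nbhd u \ {v} ∧ G.Adj u v)) := by
  have hvu : v ≠ u := by
    rintro rfl
    exact hnf (false_u_foliage hsym hirr hsupp hu hx)
  obtain ⟨hv, hcases⟩ := mem_foliage'.mp hf
  refine ⟨hv, hvu, ?_⟩
  have hv' : v ∈ (G.falseTwinSplit u x).verts := Finset.mem_insert_of_mem hv
  rcases hcases with hl | hax | ⟨-, w, hwv, hw, heq⟩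
  · by_cases hadj : G.Adj u v
    · obtain ⟨-, w, hw⟩ := hl
      have : u ∈ G.nbhd v := hsym _ _ hadj
      rw [hw, Set.mem_singleton_iff] at this
      exact Or.inl (by rw [hw, this])
    · exact absurd (mem_foliage'.mpr ⟨hv', Or.inl (false_leaf_surv hx hl hadj)⟩) hnf
  · exact absurd (false_axil_surv hsym hirr hsupp hu hx hv hax) hnf
  · by_cases hwu : w = u
    · rw [hwu] at heq
      by_cases hadj : G.Adj u v
      · exact Or.inr ⟨heq, hadj⟩
      · exact absurd (mem_foliage'.mpr ⟨hv',
          Or.inr (Or.inr (false_twin_u_surv hirr hu hx hv hvu hadj heq))⟩) hnf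
    · exact absurd (mem_foliage'.mpr ⟨hv',
        Or.inr (Or.inr (false_twin_surv hsym hx hv hw hwv hvu hwu heq))⟩) hnf

lemma false_AB (hsym : ∀ a b, G.Adj a b → G.Adj b a) {v1 v2 : V}
    (h1 : G.nbhd v1 = {u}) (ht2 : G.nbhd v2 \ {u} = G.nbhd u \ {v2})
    (hvu2 : v2 ≠ u) (hne : v1 ≠ v2) : False := by
  have hadj1 : G.Adj u v1 := by
    have : u ∈ G.nbhd v1 := by rw [h1]; exact Set.mem_singleton u
    exact hsym _ _ this
  have h2 : v1 ∈ G.nbhd v2 \ {u} := by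
    rw [ht2]
    exact ⟨hadj1, hne⟩
  have : v2 ∈ G.nbhd v1 := hsym _ _ h2.1
  rw [h1, Set.mem_singleton_iff] at this
  exact hvu2 this

lemma false_unique (hsym : ∀ a b, G.Adj a b → G.Adj b a) (hirr : ∀ a, ¬ G.Adj a a)
    (hsupp : ∀ a b, G.Adj a b → a ∈ G.verts ∧ b ∈ G.verts)
    (hu : u ∈ G.verts) (hx : x ∉ G.verts) {v1 v2 : V}
    (hf1 : v1 ∈ G.foliage) (hf2 : v2 ∈ G.foliage)
    (hn1 : v1 ∉ (G.falseTwinSplit u x).foliage)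
    (hn2 : v2 ∉ (G.falseTwinSplit u x).foliage) : v1 = v2 := by
  obtain ⟨hv1, hvu1, hc1⟩ := false_lost hsym hirr hsupp hu hx hf1 hn1
  obtain ⟨hv2, hvu2, hc2⟩ := false_lost hsym hirr hsupp hu hx hf2 hn2
  by_contra hne
  have hx1 : x ≠ v1 := fun h => hx (h ▸ hv1)
  have hx2 : x ≠ v2 := fun h => hx (h ▸ hv2)
  rcases hc1 with h1 | ⟨ht1, ha1⟩
  · rcases hc2 with h2 | ⟨ht2, ha2⟩
    · -- both leaves at u: they are twins in the new graph
      have hadj1 : G.Adj u v1 := hsym _ _ (show u ∈ G.nbhd v1 by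
        rw [h1]; exact Set.mem_singleton u)
      have hadj2 : G.Adj u v2 := hsym _ _ (show u ∈ G.nbhd v2 by
        rw [h2]; exact Set.mem_singleton u)
      refine hn1 (mem_foliage'.mpr ⟨Finset.mem_insert_of_mem hv1, Or.inr (Or.inr
        ⟨Finset.mem_insert_of_mem hv1, v2, Ne.symm hne, Finset.mem_insert_of_mem hv2, ?_⟩)⟩)
      rw [false_nbhd_of_adj hx hv1 hadj1, false_nbhd_of_adj hx hv2 hadj2, h1, h2]
      exact insert_diff_swap (by rw [Set.diff_singleton_eq_self (by simpa using hvu2),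
        Set.diff_singleton_eq_self (by simpa using hvu1)]) hx2 hx1
    · exact false_AB hsym h1 ht2 hvu2 hne
  · rcases hc2 with h2 | ⟨ht2, ha2⟩
    · exact false_AB hsym h2 ht1 hvu1 (Ne.symm hne)
    · have hmt := twin_of_common hsym hirr ht1 ht2 hvu1 hvu2 hne
      exact hn1 (mem_foliage'.mpr ⟨Finset.mem_insert_of_mem hv1,
        Or.inr (Or.inr (false_twin_surv hsym hx hv1 hv2 (Ne.symm hne) hvu1 hvu2 hmt))⟩)

lemma false_card (hG : G.IsGraph) (hu : u ∈ G.verts) (hx : x ∉ G.verts) :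
    G.foliage.card ≤ (G.falseTwinSplit u x).foliage.card := by
  obtain ⟨hsym, hirr, hsupp⟩ := hG
  refine count_lemma _ _ x (fun h => hx (Finset.mem_filter.mp h).1)
    (false_x_foliage hsym hirr hsupp hu hx) ?_
  intro v1 h1 v2 h2 hn1 hn2
  exact false_unique hsym hirr hsupp hu hx h1 h2 hn1 hn2

end FalseTwinAux

section TrueTwinAux

variable {G : LGraph V} {u x : V}

lemma true_verts : (G.trueTwinSplit u x).verts = insert x G.verts := rfl

lemma true_adj_left (hx : x ∉ G.verts) {v b : V} (hv : v ∈ G.verts) :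
    (G.trueTwinSplit u x).Adj v b ↔ G.Adj v b ∨ (b = x ∧ (G.Adj u v ∨ v = u)) := by
  show G.Adj v b ∨ (v = x ∧ (G.Adj u b ∨ b = u)) ∨ (b = x ∧ (G.Adj u v ∨ v = u)) ↔ _
  have hvx : v ≠ x := fun h => hx (h ▸ hv)
  tauto

lemma true_nbhd_of_nadj (hx : x ∉ G.verts) {v : V} (hv : v ∈ G.verts)
    (hvu : v ≠ u) (hnadj : ¬ G.Adj u v) :
    (G.trueTwinSplit u x).nbhd v = G.nbhd v := by
  ext b
  simp [LGraph.nbhd, true_adj_left hx hv, hnadj, hvu]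

lemma true_nbhd_of_adj (hx : x ∉ G.verts) {v : V} (hv : v ∈ G.verts)
    (h : G.Adj u v ∨ v = u) :
    (G.trueTwinSplit u x).nbhd v = insert x (G.nbhd v) := by
  ext b
  simp only [LGraph.nbhd, Set.mem_insert_iff, Set.mem_setOf_eq, true_adj_left hx hv, h,
    and_true]
  tauto

lemma true_nbhd_x (hsupp : ∀ a b, G.Adj a b → a ∈ G.verts ∧ b ∈ G.verts)
    (hu : u ∈ G.verts) (hx : x ∉ G.verts) :
    (G.trueTwinSplit u x).nbhd x = insert u (G.nbhd u) := by
  have hxu : x ≠ u := fun h => hx (h ▸ hu)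
  ext b
  show G.Adj x b ∨ (x = x ∧ (G.Adj u b ∨ b = u)) ∨ (b = x ∧ (G.Adj u x ∨ x = u)) ↔
    b ∈ insert u (G.nbhd u)
  have h1 : ¬ G.Adj x b := fun h => hx (hsupp _ _ h).1
  have h2 : ¬ G.Adj u x := fun h => hx (hsupp _ _ h).2
  simp only [Set.mem_insert_iff]
  constructor
  · rintro (h | ⟨-, h | rfl⟩ | ⟨rfl, h | h⟩)
    · exact absurd h h1
    · exact Or.inr h
    · exact Or.inl rfl
    · exact absurd h h2
    · exact absurd h hxu
  · rintro (rfl | h) <;> tauto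

lemma true_x_twin (hsym : ∀ a b, G.Adj a b → G.Adj b a) (hirr : ∀ a, ¬ G.Adj a a)
    (hsupp : ∀ a b, G.Adj a b → a ∈ G.verts ∧ b ∈ G.verts)
    (hu : u ∈ G.verts) (hx : x ∉ G.verts) :
    (G.trueTwinSplit u x).nbhd x \ {u} = (G.trueTwinSplit u x).nbhd u \ {x} := by
  rw [true_nbhd_x hsupp hu hx, true_nbhd_of_adj hx hu (Or.inr rfl)]
  have h1 : u ∉ G.nbhd u := hirr u
  have h2 : x ∉ G.nbhd u := fun h => hx (hsupp _ _ h).2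
  rw [Set.insert_diff_self_of_notMem h1, Set.insert_diff_self_of_notMem h2]

lemma true_x_foliage (hsym : ∀ a b, G.Adj a b → G.Adj b a) (hirr : ∀ a, ¬ G.Adj a a)
    (hsupp : ∀ a b, G.Adj a b → a ∈ G.verts ∧ b ∈ G.verts)
    (hu : u ∈ G.verts) (hx : x ∉ G.verts) : x ∈ (G.trueTwinSplit u x).foliage := by
  have hxu : x ≠ u := fun h => hx (h ▸ hu)
  refine mem_foliage'.mpr ⟨Finset.mem_insert_self _ _, Or.inr (Or.inr ?_)⟩
  exact ⟨Finset.mem_insert_self _ _, u, Ne.symm hxu, Finset.mem_insert_of_mem hu,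
    true_x_twin hsym hirr hsupp hu hx⟩

lemma true_u_foliage (hsym : ∀ a b, G.Adj a b → G.Adj b a) (hirr : ∀ a, ¬ G.Adj a a)
    (hsupp : ∀ a b, G.Adj a b → a ∈ G.verts ∧ b ∈ G.verts)
    (hu : u ∈ G.verts) (hx : x ∉ G.verts) : u ∈ (G.trueTwinSplit u x).foliage := by
  have hxu : x ≠ u := fun h => hx (h ▸ hu)
  refine mem_foliage'.mpr ⟨Finset.mem_insert_of_mem hu, Or.inr (Or.inr ?_)⟩
  exact ⟨Finset.mem_insert_of_mem hu, x, hxu, Finset.mem_insert_self _ _,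
    (true_x_twin hsym hirr hsupp hu hx).symm⟩

lemma true_leaf_surv (hx : x ∉ G.verts) {v : V} (hl : G.IsLeaf v)
    (hvu : v ≠ u) (hnadj : ¬ G.Adj u v) : (G.trueTwinSplit u x).IsLeaf v := by
  obtain ⟨hv, w, hw⟩ := hl
  exact ⟨Finset.mem_insert_of_mem hv, w, by rw [true_nbhd_of_nadj hx hv hvu hnadj, hw]⟩

lemma true_twin_surv (hsym : ∀ a b, G.Adj a b → G.Adj b a) (hx : x ∉ G.verts)
    {v w : V} (hv : v ∈ G.verts) (hw : w ∈ G.verts) (hwv : w ≠ v)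
    (hvu : v ≠ u) (hwu : w ≠ u) (heq : G.nbhd v \ {w} = G.nbhd w \ {v}) :
    (G.trueTwinSplit u x).IsTwin v := by
  have h0 : G.Adj v u ↔ G.Adj w u := twin_elem' heq (Ne.symm hwu) (Ne.symm hvu)
  have hvx : x ≠ v := fun h => hx (h ▸ hv)
  have hwx : x ≠ w := fun h => hx (h ▸ hw)
  refine ⟨Finset.mem_insert_of_mem hv, w, hwv, Finset.mem_insert_of_mem hw, ?_⟩
  by_cases hadj : G.Adj u v
  · have hadjw : G.Adj u w := hsym _ _ (h0.mp (hsym _ _ hadj))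
    rw [true_nbhd_of_adj hx hv (Or.inl hadj), true_nbhd_of_adj hx hw (Or.inl hadjw)]
    exact insert_diff_swap heq hwx hvx
  · have hadjw : ¬ G.Adj u w := fun h => hadj (hsym _ _ (h0.mpr (hsym _ _ h)))
    rw [true_nbhd_of_nadj hx hv hvu hadj, true_nbhd_of_nadj hx hw hwu hadjw]
    exact heq

lemma true_twin_u_surv (hu : u ∈ G.verts) (hx : x ∉ G.verts)
    {v : V} (hv : v ∈ G.verts) (hvu : v ≠ u) (hadj : G.Adj u v)
    (heq : G.nbhd v \ {u} = G.nbhd u \ {v}) : (G.trueTwinSplit u x).IsTwin v := by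
  have hxu : x ≠ u := fun h => hx (h ▸ hu)
  have hxv : x ≠ v := fun h => hx (h ▸ hv)
  refine ⟨Finset.mem_insert_of_mem hv, u, Ne.symm hvu, Finset.mem_insert_of_mem hu, ?_⟩
  rw [true_nbhd_of_adj hx hv (Or.inl hadj), true_nbhd_of_adj hx hu (Or.inr rfl)]
  exact insert_diff_swap heq hxu hxv

lemma true_lost (hsym : ∀ a b, G.Adj a b → G.Adj b a) (hirr : ∀ a, ¬ G.Adj a a)
    (hsupp : ∀ a b, G.Adj a b → a ∈ G.verts ∧ b ∈ G.verts)
    (hu : u ∈ G.verts) (hx : x ∉ G.verts) {v : V}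
    (hf : v ∈ G.foliage) (hnf : v ∉ (G.trueTwinSplit u x).foliage) :
    v ∈ G.verts ∧ v ≠ u ∧
      (G.nbhd v = {u} ∨ (G.IsLeaf u ∧ G.Adj u v) ∨
        (G.nbhd v \ {u} = G.nbhd u \ {v} ∧ ¬ G.Adj u v)) := by
  have hvu : v ≠ u := by
    rintro rfl
    exact hnf (true_u_foliage hsym hirr hsupp hu hx)
  obtain ⟨hv, hcases⟩ := mem_foliage'.mp hf
  refine ⟨hv, hvu, ?_⟩
  have hv' : v ∈ (G.trueTwinSplit u x).verts := Finset.mem_insert_of_mem hv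
  rcases hcases with hl | ⟨l, hlf, hla⟩ | ⟨-, w, hwv, hw, heq⟩
  · by_cases hadj : G.Adj u v
    · obtain ⟨-, w, hw⟩ := hl
      have : u ∈ G.nbhd v := hsym _ _ hadj
      rw [hw, Set.mem_singleton_iff] at this
      exact Or.inl (by rw [hw, this])
    · exact absurd (mem_foliage'.mpr ⟨hv', Or.inl (true_leaf_surv hx hl hvu hadj)⟩) hnf
  · by_cases hlu : l = u
    · rw [hlu] at hlf hla
      exact Or.inr (Or.inl ⟨hlf, hla⟩)
    · by_cases hadj : G.Adj u l
      · obtain ⟨hlv, w, hw⟩ := hlf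
        have e1 : u ∈ G.nbhd l := hsym _ _ hadj
        have e2 : v ∈ G.nbhd l := hla
        rw [hw, Set.mem_singleton_iff] at e1 e2
        exact absurd (e2.trans e1.symm) hvu
      · refine absurd (mem_foliage'.mpr ⟨hv', Or.inr (Or.inl ⟨l, ?_, Or.inl hla⟩)⟩) hnf
        exact true_leaf_surv hx hlf hlu hadj
  · by_cases hwu : w = u
    · rw [hwu] at heq
      by_cases hadj : G.Adj u v
      · exact absurd (mem_foliage'.mpr ⟨hv',
          Or.inr (Or.inr (true_twin_u_surv hu hx hv hvu hadj heq))⟩) hnf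
      · exact Or.inr (Or.inr ⟨heq, hadj⟩)
    · exact absurd (mem_foliage'.mpr ⟨hv',
        Or.inr (Or.inr (true_twin_surv hsym hx hv hw hwv hvu hwu heq))⟩) hnf

lemma true_AC (hsym : ∀ a b, G.Adj a b → G.Adj b a) {v1 v2 : V}
    (h1 : G.nbhd v1 = {u}) (ht2 : G.nbhd v2 \ {u} = G.nbhd u \ {v2})
    (hvu2 : v2 ≠ u) (hne : v1 ≠ v2) : False := by
  have hadj1 : G.Adj u v1 := by
    have : u ∈ G.nbhd v1 := by rw [h1]; exact Set.mem_singleton u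
    exact hsym _ _ this
  have h2 : v1 ∈ G.nbhd v2 \ {u} := by
    rw [ht2]
    exact ⟨hadj1, hne⟩
  have : v2 ∈ G.nbhd v1 := hsym _ _ h2.1
  rw [h1, Set.mem_singleton_iff] at this
  exact hvu2 this

lemma true_BC (hsym : ∀ a b, G.Adj a b → G.Adj b a) (hirr : ∀ a, ¬ G.Adj a a)
    (hsupp : ∀ a b, G.Adj a b → a ∈ G.verts ∧ b ∈ G.verts)
    (hu : u ∈ G.verts) (hx : x ∉ G.verts) {v1 v2 : V}
    (hul : G.IsLeaf u) (hua1 : G.Adj u v1)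
    (ht2 : G.nbhd v2 \ {u} = G.nbhd u \ {v2}) (hna2 : ¬ G.Adj u v2)
    (hvu2 : v2 ≠ u) (hv2 : v2 ∈ G.verts)
    (hn2 : v2 ∉ (G.trueTwinSplit u x).foliage) (hne : v1 ≠ v2) : False := by
  obtain ⟨-, w, hw⟩ := hul
  have hv1w : v1 = w := by
    have : v1 ∈ G.nbhd u := hua1
    rwa [hw, Set.mem_singleton_iff] at this
  have hnu : u ∉ G.nbhd v2 := fun h => hna2 (hsym _ _ h)
  have hleaf : G.nbhd v2 = {v1} := by
    ext z
    simp only [Set.mem_singleton_iff]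
    constructor
    · intro hz
      have hzu : z ≠ u := by rintro rfl; exact hnu hz
      have hmem : z ∈ G.nbhd u \ {v2} := ht2 ▸ (⟨hz, hzu⟩ : z ∈ G.nbhd v2 \ {u})
      have : z ∈ G.nbhd u := hmem.1
      rw [hw, Set.mem_singleton_iff] at this
      exact this.trans hv1w.symm
    · intro hz
      rw [hz]
      have h1 : v1 ∈ G.nbhd u \ {v2} := ⟨hua1, hne⟩
      rw [← ht2] at h1
      exact h1.1
  exact hn2 (mem_foliage'.mpr ⟨Finset.mem_insert_of_mem hv2,
    Or.inl (true_leaf_surv hx ⟨hv2, v1, hleaf⟩ hvu2 hna2)⟩)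

lemma true_unique (hsym : ∀ a b, G.Adj a b → G.Adj b a) (hirr : ∀ a, ¬ G.Adj a a)
    (hsupp : ∀ a b, G.Adj a b → a ∈ G.verts ∧ b ∈ G.verts)
    (hu : u ∈ G.verts) (hx : x ∉ G.verts) {v1 v2 : V}
    (hf1 : v1 ∈ G.foliage) (hf2 : v2 ∈ G.foliage)
    (hn1 : v1 ∉ (G.trueTwinSplit u x).foliage)
    (hn2 : v2 ∉ (G.trueTwinSplit u x).foliage) : v1 = v2 := by
  obtain ⟨hv1, hvu1, hc1⟩ := true_lost hsym hirr hsupp hu hx hf1 hn1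
  obtain ⟨hv2, hvu2, hc2⟩ := true_lost hsym hirr hsupp hu hx hf2 hn2
  by_contra hne
  have hx1 : x ≠ v1 := fun h => hx (h ▸ hv1)
  have hx2 : x ≠ v2 := fun h => hx (h ▸ hv2)
  rcases hc1 with h1 | ⟨hul1, ha1⟩ | ⟨ht1, hna1⟩
  · rcases hc2 with h2 | ⟨hul2, ha2⟩ | ⟨ht2, hna2⟩
    · -- both leaves at u: twins in the new graph
      have hadj1 : G.Adj u v1 := hsym _ _ (show u ∈ G.nbhd v1 by
        rw [h1]; exact Set.mem_singleton u)
      have hadj2 : G.Adj u v2 := hsym _ _ (show u ∈ G.nbhd v2 by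
        rw [h2]; exact Set.mem_singleton u)
      refine hn1 (mem_foliage'.mpr ⟨Finset.mem_insert_of_mem hv1, Or.inr (Or.inr
        ⟨Finset.mem_insert_of_mem hv1, v2, Ne.symm hne, Finset.mem_insert_of_mem hv2, ?_⟩)⟩)
      rw [true_nbhd_of_adj hx hv1 (Or.inl hadj1), true_nbhd_of_adj hx hv2 (Or.inl hadj2),
        h1, h2]
      exact insert_diff_swap (by rw [Set.diff_singleton_eq_self (by simpa using hvu2),
        Set.diff_singleton_eq_self (by simpa using hvu1)]) hx2 hx1
    · -- v1 leaf at u, u leaf: v1 = v2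
      obtain ⟨-, w, hw⟩ := hul2
      have hadj1 : G.Adj u v1 := hsym _ _ (show u ∈ G.nbhd v1 by
        rw [h1]; exact Set.mem_singleton u)
      have e1 : v1 ∈ G.nbhd u := hadj1
      have e2 : v2 ∈ G.nbhd u := ha2
      rw [hw, Set.mem_singleton_iff] at e1 e2
      exact hne (e1.trans e2.symm)
    · exact true_AC hsym h1 ht2 hvu2 hne
  · rcases hc2 with h2 | ⟨hul2, ha2⟩ | ⟨ht2, hna2⟩
    · obtain ⟨-, w, hw⟩ := hul1
      have hadj2 : G.Adj u v2 := hsym _ _ (show u ∈ G.nbhd v2 by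
        rw [h2]; exact Set.mem_singleton u)
      have e1 : v1 ∈ G.nbhd u := ha1
      have e2 : v2 ∈ G.nbhd u := hadj2
      rw [hw, Set.mem_singleton_iff] at e1 e2
      exact hne (e1.trans e2.symm)
    · obtain ⟨-, w, hw⟩ := hul1
      have e1 : v1 ∈ G.nbhd u := ha1
      have e2 : v2 ∈ G.nbhd u := ha2
      rw [hw, Set.mem_singleton_iff] at e1 e2
      exact hne (e1.trans e2.symm)
    · exact true_BC hsym hirr hsupp hu hx hul1 ha1 ht2 hna2 hvu2 hv2 hn2 hne
  · rcases hc2 with h2 | ⟨hul2, ha2⟩ | ⟨ht2, hna2⟩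
    · exact true_AC hsym h2 ht1 hvu1 (Ne.symm hne)
    · exact true_BC hsym hirr hsupp hu hx hul2 ha2 ht1 hna1 hvu1 hv1 hn1 (Ne.symm hne)
    · have hmt := twin_of_common hsym hirr ht1 ht2 hvu1 hvu2 hne
      exact hn1 (mem_foliage'.mpr ⟨Finset.mem_insert_of_mem hv1,
        Or.inr (Or.inr (true_twin_surv hsym hx hv1 hv2 (Ne.symm hne) hvu1 hvu2 hmt))⟩)

lemma true_card (hG : G.IsGraph) (hu : u ∈ G.verts) (hx : x ∉ G.verts) :
    G.foliage.card ≤ (G.trueTwinSplit u x).foliage.card := by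
  obtain ⟨hsym, hirr, hsupp⟩ := hG
  refine count_lemma _ _ x (fun h => hx (Finset.mem_filter.mp h).1)
    (true_x_foliage hsym hirr hsupp hu hx) ?_
  intro v1 h1 v2 h2 hn1 hn2
  exact true_unique hsym hirr hsupp hu hx h1 h2 hn1 hn2

end TrueTwinAux

end Foliage8Aux
/-- adding a leaf or performing a (true or false) twin-split on
a connected distance-hereditary graph does not decrease the size of the
foliage. -/
theorem foliage_card_mono (G : LGraph V) (hG : G.IsGraph) (hconn : G.Connected)
    (hdh : G.DistanceHereditary) (u x : V) (hu : u ∈ G.verts) (hx : x ∉ G.verts)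
    (G' : LGraph V)
    (h : G' = G.addLeaf u x ∨ G' = G.falseTwinSplit u x ∨ G' = G.trueTwinSplit u x) :
    G.foliage.card ≤ G'.foliage.card := by
  rcases h with rfl | rfl | rfl
  · exact addLeaf_card hG hu hx
  · exact false_card hG hu hx
  · exact true_card hG hu hx
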